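/- The Contraction rule is sound for K-relations over any nontrivial positive and multiplicatively cancellative commutative semiring K: for every K-relation R over a finite schema V with finite nonempty domains and pairwise disjoint X, Y, Z, W ⊆ V, if R satisfies CI(X; Y, Z) and CI(X∪Z; Y, W), then R satisfies CI(X; Y, Z∪W). -/
import Mathlib


/-! # Preliminaries: K-relations over semirings -/

open Finset

variable {V : Type*}

/-- A tuple over the finite set `X` of variables: it assigns to each variable
`a ∈ X` a value in its domain `Dom a`. -/
abbrev Tup (Dom : V → Type*) (X : Finset V) : Type _ :=
  ∀ a : X, Dom a

/-- Restriction `t[Y]` of a tuple `t` over `X` to a subset `Y ⊆ X`. -/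
def Tup.restrict {Dom : V → Type*} {X Y : Finset V} (h : Y ⊆ X) (t : Tup Dom X) :
    Tup Dom Y :=
  fun a => t ⟨a.1, h a.2⟩

open Classical in
/-- The marginal of a `K`-relation `R` over a schema `X` on a subset `Y ⊆ X`,
evaluated at a tuple `u` over `Y`: the sum of `R t` over all tuples `t` over `X`
with `t[Y] = u`. -/
noncomputable def margin {K : Type*} [CommSemiring K] [DecidableEq V]
    {Dom : V → Type*} [∀ a, Fintype (Dom a)] {X Y : Finset V}
    (R : Tup Dom X → K) (h : Y ⊆ X) (u : Tup Dom Y) : K :=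
  ∑ t : Tup Dom X, if Tup.restrict h t = u then R t else 0

open Classical in
/-- `c_S(u)`: the product of the marginal `S[Z]` over all tuples `v` in the
support of `S[Z]` different from `u` (empty products are `1`). -/
noncomputable def cfun {K : Type*} [CommSemiring K] [DecidableEq V]
    {Dom : V → Type*} [∀ a, Fintype (Dom a)] {Y Z : Finset V}
    (S : Tup Dom Y → K) (h : Z ⊆ Y) (u : Tup Dom Z) : K :=
  ∏ v : Tup Dom Z, if margin S h v ≠ 0 ∧ v ≠ u then margin S h v else 1

/-- The join `R ⋈ S` of a `K`-relation `R` over `X` and a `K`-relation `S` over `Y`,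
realized on the schema `T = X ∪ Y`:
`(R ⋈ S)(t) = R(t[X]) ⬝ S(t[Y]) ⬝ c_S(t[X ∩ Y])`. -/
noncomputable def joinOn {K : Type*} [CommSemiring K] [DecidableEq V]
    {Dom : V → Type*} [∀ a, Fintype (Dom a)] {X Y T : Finset V}
    (R : Tup Dom X → K) (S : Tup Dom Y → K)
    (hX : X ⊆ T) (hY : Y ⊆ T) (_hT : T ⊆ X ∪ Y) : Tup Dom T → K :=
  fun t =>
    R (Tup.restrict hX t) * S (Tup.restrict hY t) *
      cfun (Z := X ∩ Y) S Finset.inter_subset_right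
        (Tup.restrict ((Finset.inter_subset_right (s₁ := X)).trans hY) t)

/-- A `K`-relation `R` over the schema `S` satisfies the conditional independence
`CI(X; Y, Z)` (for `X, Y, Z ⊆ S`) if for every tuple `t` over `X ∪ Y ∪ Z`,
`R(t[X∪Y]) ⬝ R(t[X∪Z]) = R(t[X∪Y∪Z]) ⬝ R(t[X])`, all values being marginals of `R`. -/
def satCI {K : Type*} [CommSemiring K] [DecidableEq V]
    {Dom : V → Type*} [∀ a, Fintype (Dom a)] {S X Y Z : Finset V}
    (R : Tup Dom S → K) (hX : X ⊆ S) (hY : Y ⊆ S) (hZ : Z ⊆ S) : Prop :=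
  ∀ t : Tup Dom (X ∪ Y ∪ Z),
    margin R (Finset.union_subset hX hY) (Tup.restrict Finset.subset_union_left t) *
      margin R (Finset.union_subset hX hZ)
        (Tup.restrict (Finset.union_subset
          (Finset.subset_union_left.trans Finset.subset_union_left)
          Finset.subset_union_right) t) =
    margin R (Finset.union_subset (Finset.union_subset hX hY) hZ) t *
      margin R hX
        (Tup.restrict (Finset.subset_union_left.trans Finset.subset_union_left) t)

/-- A `K`-relation `R` over the schema `S` satisfies the functional dependency
`U → W` if any two tuples in the support of `R` agreeing on `U` agree on `W`. -/
def satFD {K : Type*} [Zero K] {Dom : V → Type*} {S U W : Finset V}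
    (R : Tup Dom S → K) (hU : U ⊆ S) (hW : W ⊆ S) : Prop :=
  ∀ t t' : Tup Dom S, R t ≠ 0 → R t' ≠ 0 →
    Tup.restrict hU t = Tup.restrict hU t' → Tup.restrict hW t = Tup.restrict hW t'

/-- Two `K`-relations over the same schema are equivalent (up to normalization),
`R ≡ R'`, if `aR = bR'` for some nonzero `a, b ∈ K`. -/
def equivRel {K : Type*} [CommSemiring K] {Dom : V → Type*} {X : Finset V}
    (R R' : Tup Dom X → K) : Prop :=
  ∃ a b : K, a ≠ 0 ∧ b ≠ 0 ∧ ∀ t, a * R t = b * R' t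

/-- `K` is `⊕`-positive: `a + b = 0` implies `a = b = 0`. -/
def plusPos (K : Type*) [CommSemiring K] : Prop :=
  ∀ a b : K, a + b = 0 → a = 0 ∧ b = 0

/-- `K` has no divisors of zero. -/
def noZD (K : Type*) [CommSemiring K] : Prop :=
  ∀ a b : K, a * b = 0 → a = 0 ∨ b = 0

/-- `K` is positive: `⊕`-positive and without zero divisors. -/
def posSemiring (K : Type*) [CommSemiring K] : Prop :=
  plusPos K ∧ noZD K

/-- `K` is multiplicatively cancellative. -/
def mulCanc (K : Type*) [CommSemiring K] : Prop :=
  ∀ a b c : K, a ≠ 0 → a * b = a * c → b = c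

/-- `K` is additively cancellative. -/
def addCanc (K : Type*) [CommSemiring K] : Prop :=
  ∀ a b c : K, a + b = a + c → b = c

/-- `K` is naturally totally ordered: the preorder `a ≤ b ↔ ∃ c, a + c = b`
is antisymmetric and total. -/
def natTotOrd (K : Type*) [CommSemiring K] : Prop :=
  (∀ a b : K, (∃ c, a + c = b) → (∃ c, b + c = a) → a = b) ∧
    (∀ a b : K, (∃ c, a + c = b) ∨ (∃ c, b + c = a))

/-- `K` is a semifield: every nonzero element has a multiplicative inverse. -/
def isSemifield (K : Type*) [CommSemiring K] : Prop :=
  ∀ a : K, a ≠ 0 → ∃ b, a * b = 1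

theorem subL [DecidableEq V] {X Y Z : Finset V} : X ⊆ X ∪ Y ∪ Z :=
  Finset.subset_union_left.trans Finset.subset_union_left

theorem subM [DecidableEq V] {X Y Z : Finset V} : Y ⊆ X ∪ Y ∪ Z :=
  Finset.subset_union_right.trans Finset.subset_union_left

theorem subR [DecidableEq V] {X Y Z : Finset V} : Z ⊆ X ∪ Y ∪ Z :=
  Finset.subset_union_right

theorem subXY [DecidableEq V] {X Y Z : Finset V} : X ∪ Y ⊆ X ∪ Y ∪ Z :=
  Finset.subset_union_left

theorem subXZ [DecidableEq V] {X Y Z : Finset V} : X ∪ Z ⊆ X ∪ Y ∪ Z :=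
  Finset.union_subset subL subR

theorem unionSplit [DecidableEq V] {X Y Z : Finset V} :
    X ∪ Y ∪ Z ⊆ (X ∪ Y) ∪ (X ∪ Z) := by
  intro a ha
  simp only [Finset.mem_union] at ha ⊢
  tauto

theorem plusPos_sum_zero {K : Type*} [CommSemiring K] (hpp : plusPos K)
    {ι : Type*} {s : Finset ι} {f : ι → K} (h : ∑ i ∈ s, f i = 0) :
    ∀ i ∈ s, f i = 0 := by
  classical
  intro i hi
  rw [← Finset.add_sum_erase s f hi] at h
  exact (hpp _ _ h).1

theorem margin_zero_mono [DecidableEq V] {K : Type*} [CommSemiring K]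
    (hpp : plusPos K) {Dom : V → Type*} [∀ a, Fintype (Dom a)]
    {S A B : Finset V} (hA : A ⊆ S) (hB : B ⊆ S) (hAB : A ⊆ B)
    (R : Tup Dom S → K) (u : Tup Dom B)
    (h0 : margin R hA (Tup.restrict hAB u) = 0) :
    margin R hB u = 0 := by
  classical
  unfold margin at h0 ⊢
  apply Finset.sum_eq_zero
  intro x _
  split_ifs with hx
  · have h1 := plusPos_sum_zero hpp h0 x (Finset.mem_univ x)
    have hx' : Tup.restrict hA x = Tup.restrict hAB u := by rw [← hx]; rfl
    rwa [if_pos hx'] at h1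
  · rfl

/-- Contraction is sound for `K`-relations over any nontrivial positive,
multiplicatively cancellative commutative semiring. -/
theorem contraction_sound
    [DecidableEq V] [Fintype V] {Dom : V → Type*}
    [∀ a, Fintype (Dom a)] [∀ a, Nonempty (Dom a)]
    {K : Type*} [CommSemiring K] [Nontrivial K]
    (hpos : posSemiring K) (hmc : mulCanc K)
    {X Y Z W : Finset V}
    (hXY : Disjoint X Y) (hXZ : Disjoint X Z) (hXW : Disjoint X W)
    (hYZ : Disjoint Y Z) (hYW : Disjoint Y W) (hZW : Disjoint Z W)
    (R : Tup Dom (Finset.univ : Finset V) → K)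
    (h1 : satCI R (Finset.subset_univ X) (Finset.subset_univ Y) (Finset.subset_univ Z))
    (h2 : satCI R (Finset.subset_univ (X ∪ Z)) (Finset.subset_univ Y)
      (Finset.subset_univ W)) :
    satCI R (Finset.subset_univ X) (Finset.subset_univ Y)
      (Finset.subset_univ (Z ∪ W)) := by
  intro t
  classical
  set s : Tup Dom (Finset.univ : Finset V) := fun a =>
    if h : (a : V) ∈ X ∪ Y ∪ (Z ∪ W) then t ⟨a, h⟩ else Classical.arbitrary _ with hs
  have hst : Tup.restrict (Finset.subset_univ (X ∪ Y ∪ (Z ∪ W))) s = t := by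
    funext a
    show (if h : (a : V) ∈ X ∪ Y ∪ (Z ∪ W) then t ⟨a, h⟩ else Classical.arbitrary _) = t a
    rw [dif_pos a.2]
  set m' : Finset V → K := fun A =>
    margin R (Finset.subset_univ A) (Tup.restrict (Finset.subset_univ A) s) with hm'
  rw [← hst]
  show m' (X ∪ Y) * m' (X ∪ (Z ∪ W)) = m' (X ∪ Y ∪ (Z ∪ W)) * m' X
  have e1 : m' (X ∪ Y) * m' (X ∪ Z) = m' (X ∪ Y ∪ Z) * m' X :=
    h1 (Tup.restrict (Finset.subset_univ _) s)
  have e2 : m' ((X ∪ Z) ∪ Y) * m' ((X ∪ Z) ∪ W) = m' ((X ∪ Z) ∪ Y ∪ W) * m' (X ∪ Z) :=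
    h2 (Tup.restrict (Finset.subset_univ _) s)
  have r1 : (X ∪ Z) ∪ Y = X ∪ Y ∪ Z := Finset.union_right_comm X Z Y
  have r2 : (X ∪ Z) ∪ W = X ∪ (Z ∪ W) := Finset.union_assoc X Z W
  have r3 : (X ∪ Z) ∪ Y ∪ W = X ∪ Y ∪ (Z ∪ W) := by
    ext a; simp only [Finset.mem_union]; tauto
  rw [r3, r1, r2] at e2
  by_cases hb : m' (X ∪ Z) = 0
  · have hsub1 : X ∪ Z ⊆ X ∪ (Z ∪ W) :=
      Finset.union_subset_union (Finset.Subset.refl X) Finset.subset_union_left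
    have hsub2 : X ∪ Z ⊆ X ∪ Y ∪ (Z ∪ W) := by
      intro a ha; simp only [Finset.mem_union] at ha ⊢; tauto
    have hc : m' (X ∪ (Z ∪ W)) = 0 :=
      margin_zero_mono hpos.1 (Finset.subset_univ _) (Finset.subset_univ _) hsub1 R
        (Tup.restrict (Finset.subset_univ _) s) hb
    have hf : m' (X ∪ Y ∪ (Z ∪ W)) = 0 :=
      margin_zero_mono hpos.1 (Finset.subset_univ _) (Finset.subset_univ _) hsub2 R
        (Tup.restrict (Finset.subset_univ _) s) hb
    rw [hc, hf, mul_zero, zero_mul]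
  · apply hmc (m' (X ∪ Z)) _ _ hb
    calc m' (X ∪ Z) * (m' (X ∪ Y) * m' (X ∪ (Z ∪ W)))
        = (m' (X ∪ Y) * m' (X ∪ Z)) * m' (X ∪ (Z ∪ W)) := by ring
      _ = (m' (X ∪ Y ∪ Z) * m' X) * m' (X ∪ (Z ∪ W)) := by rw [e1]
      _ = (m' (X ∪ Y ∪ Z) * m' (X ∪ (Z ∪ W))) * m' X := by ring
      _ = (m' (X ∪ Y ∪ (Z ∪ W)) * m' (X ∪ Z)) * m' X := by rw [e2]
      _ = m' (X ∪ Z) * (m' (X ∪ Y ∪ (Z ∪ W)) * m' X) := by ring
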